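/- Let I, T ≥ 1 and L ≥ 1 be positive integers, let C1 and C2 be real numbers, let Γ0, Γ1, Γ2 be L×L real symmetric matrices, and let Λhalf = diag(σ_{y1},…,σ_{yL}) with each σ_{yl} > 0. For real N > 0 define Ω(N) = (I·T/N)·Λhalf·[C1·(Γ2 − N·Γ1 + (N−1)·Γ0)^{-1} − C2·(Γ2 + (T−1)·N·Γ1 + (N−1)·Γ0)^{-1}]^{-1}·Λhalf, where the inverse is the total (nonsingular) matrix inverse. Assume Γ0 − Γ1, Γ0 + (T−1)·Γ1, and C1·(Γ0 − Γ1)^{-1} − C2·(Γ0 + (T−1)·Γ1)^{-1} are invertible. Then, as N → ∞, Ω(N) converges (entrywise) to the matrix I·T·Λhalf·[C1·(Γ0 − Γ1)^{-1} − C2·(Γ0 + (T−1)·Γ1)^{-1}]^{-1}·Λhalf. -/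

import Mathlib

open Matrix Filter

/-- Pulling a nonzero scalar out of a matrix inverse over a field. -/
lemma smul_matrix_inv {L : ℕ} (k : ℝ) (hk : k ≠ 0) (A : Matrix (Fin L) (Fin L) ℝ) :
    (k • A)⁻¹ = k⁻¹ • A⁻¹ := by
  by_cases h : IsUnit A.det
  · apply Matrix.inv_eq_left_inv
    rw [Matrix.smul_mul, Matrix.mul_smul, smul_smul, inv_mul_cancel₀ hk, one_smul,
      Matrix.nonsing_inv_mul A h]
  · have h2 : ¬ IsUnit (k • A).det := by
      rw [Matrix.det_smul]
      intro hu
      exact h (isUnit_of_mul_isUnit_right hu)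
    rw [Matrix.nonsing_inv_apply_not_isUnit _ h, Matrix.nonsing_inv_apply_not_isUnit _ h2,
      smul_zero]

/-- As the cluster-period size N → ∞, the covariance matrix Ω(N) of the
treatment effect estimators converges entrywise to
`I·T·Λhalf·[C1·(Γ0 − Γ1)⁻¹ − C2·(Γ0 + (T−1)·Γ1)⁻¹]⁻¹·Λhalf`. -/
theorem limit_covariance_as_N_to_infty
    (I T L : ℕ) (hI : 1 ≤ I) (hT : 1 ≤ T) (hL : 1 ≤ L)
    (C1 C2 : ℝ)
    (G0 G1 G2 : Matrix (Fin L) (Fin L) ℝ)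
    (hG0 : G0.IsSymm) (hG1 : G1.IsSymm) (hG2 : G2.IsSymm)
    (σ : Fin L → ℝ) (hσ : ∀ l, 0 < σ l)
    (h01 : IsUnit (G0 - G1))
    (h0T1 : IsUnit (G0 + ((T : ℝ) - 1) • G1))
    (hlim : IsUnit (C1 • (G0 - G1)⁻¹ - C2 • (G0 + ((T : ℝ) - 1) • G1)⁻¹)) :
    ∀ l l' : Fin L,
      Tendsto
        (fun N : ℝ =>
          ((((I : ℝ) * T) / N) •
            (Matrix.diagonal σ *
              (C1 • (G2 - N • G1 + (N - 1) • G0)⁻¹ -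
                C2 • (G2 + (((T : ℝ) - 1) * N) • G1 + (N - 1) • G0)⁻¹)⁻¹ *
              Matrix.diagonal σ)) l l')
        atTop
        (nhds
          ((((I : ℝ) * T) •
            (Matrix.diagonal σ *
              (C1 • (G0 - G1)⁻¹ - C2 • (G0 + ((T : ℝ) - 1) • G1)⁻¹)⁻¹ *
              Matrix.diagonal σ)) l l')) := by
  intro l l'
  set D : Matrix (Fin L) (Fin L) ℝ := Matrix.diagonal σ with hD
  set S1 : Matrix (Fin L) (Fin L) ℝ := G0 - G1 with hS1
  set S2 : Matrix (Fin L) (Fin L) ℝ := G0 + ((T : ℝ) - 1) • G1 with hS2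
  set E : Matrix (Fin L) (Fin L) ℝ := G2 - G0 with hE
  -- the "slow-variable" function
  set g : ℝ → Matrix (Fin L) (Fin L) ℝ := fun t =>
    ((I : ℝ) * T) • (D * (C1 • (S1 + t • E)⁻¹ - C2 • (S2 + t • E)⁻¹)⁻¹ * D) with hg
  have hg0 : g 0 = ((I : ℝ) * T) • (D * (C1 • S1⁻¹ - C2 • S2⁻¹)⁻¹ * D) := by
    simp [hg]
  -- continuity of g at 0, entrywise
  have hcont : ContinuousAt g 0 := by
    have hinv1 : ContinuousAt (fun t : ℝ => (S1 + t • E)⁻¹) 0 := by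
      have hC : Continuous fun t : ℝ => S1 + t • E :=
        continuous_const.add (continuous_id.smul continuous_const)
      have hdet : IsUnit S1.det := (Matrix.isUnit_iff_isUnit_det _).mp h01
      have h0 : ContinuousAt Inv.inv (S1 + (0 : ℝ) • E) := by
        refine continuousAt_matrix_inv _ ?_
        have : (S1 + (0 : ℝ) • E) = S1 := by simp
        rw [this]
        exact NormedRing.inverse_continuousAt hdet.unit
      simpa [Function.comp_def] using
        ContinuousAt.comp (f := fun t : ℝ => S1 + t • E) (x := (0 : ℝ)) h0 hC.continuousAt
    have hinv2 : ContinuousAt (fun t : ℝ => (S2 + t • E)⁻¹) 0 := by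
      have hC : Continuous fun t : ℝ => S2 + t • E :=
        continuous_const.add (continuous_id.smul continuous_const)
      have hdet : IsUnit S2.det := (Matrix.isUnit_iff_isUnit_det _).mp h0T1
      have h0 : ContinuousAt Inv.inv (S2 + (0 : ℝ) • E) := by
        refine continuousAt_matrix_inv _ ?_
        have : (S2 + (0 : ℝ) • E) = S2 := by simp
        rw [this]
        exact NormedRing.inverse_continuousAt hdet.unit
      simpa [Function.comp_def] using
        ContinuousAt.comp (f := fun t : ℝ => S2 + t • E) (x := (0 : ℝ)) h0 hC.continuousAt
    have hmid : ContinuousAt (fun t : ℝ => C1 • (S1 + t • E)⁻¹ - C2 • (S2 + t • E)⁻¹) 0 :=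
      (((continuousAt_const (y := C1)).smul hinv1).sub ((continuousAt_const (y := C2)).smul hinv2))
    have hmiddet : IsUnit (C1 • S1⁻¹ - C2 • S2⁻¹).det :=
      (Matrix.isUnit_iff_isUnit_det _).mp hlim
    have hinvmid : ContinuousAt (fun t : ℝ =>
        (C1 • (S1 + t • E)⁻¹ - C2 • (S2 + t • E)⁻¹)⁻¹) 0 := by
      have h0 : ContinuousAt Inv.inv (C1 • (S1 + (0:ℝ) • E)⁻¹ - C2 • (S2 + (0:ℝ) • E)⁻¹) := by
        refine continuousAt_matrix_inv _ ?_
        have : (C1 • (S1 + (0:ℝ) • E)⁻¹ - C2 • (S2 + (0:ℝ) • E)⁻¹)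
            = C1 • S1⁻¹ - C2 • S2⁻¹ := by simp
        rw [this]
        exact NormedRing.inverse_continuousAt hmiddet.unit
      simpa [Function.comp_def] using
        ContinuousAt.comp (f := fun t : ℝ => C1 • (S1 + t • E)⁻¹ - C2 • (S2 + t • E)⁻¹)
          (x := (0 : ℝ)) h0 hmid
    exact (continuousAt_const (y := ((I : ℝ) * T))).smul
      (((continuousAt_const (y := D)).mul hinvmid).mul (continuousAt_const (y := D)))
  -- entrywise: pick out the (l, l') entry
  have hentry : ContinuousAt (fun t : ℝ => g t l l') 0 := by
    have hc : Continuous fun M : Matrix (Fin L) (Fin L) ℝ => M l l' :=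
      Continuous.matrix_elem continuous_id l l'
    exact hc.continuousAt.comp hcont
  -- composition with N ↦ N⁻¹
  have htend : Tendsto (fun N : ℝ => g N⁻¹ l l') atTop
      (nhds (g 0 l l')) := by
    have h1 : Tendsto (fun N : ℝ => N⁻¹) atTop (nhds (0 : ℝ)) := tendsto_inv_atTop_zero
    exact (hentry.tendsto).comp h1
  -- eventual equality of the two functions
  have heq : ∀ᶠ N : ℝ in atTop,
      g N⁻¹ l l'
        = ((((I : ℝ) * T) / N) •
            (D * (C1 • (G2 - N • G1 + (N - 1) • G0)⁻¹ -
                C2 • (G2 + (((T : ℝ) - 1) * N) • G1 + (N - 1) • G0)⁻¹)⁻¹ * D)) l l' := by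
    filter_upwards [eventually_gt_atTop (0 : ℝ)] with N hN
    have hN0 : N ≠ 0 := ne_of_gt hN
    have hA : G2 - N • G1 + (N - 1) • G0 = N • (S1 + N⁻¹ • E) := by
      rw [smul_add, smul_smul, mul_inv_cancel₀ hN0, one_smul, hS1, hE]
      module
    have hB : G2 + (((T : ℝ) - 1) * N) • G1 + (N - 1) • G0 = N • (S2 + N⁻¹ • E) := by
      rw [smul_add, smul_smul, mul_inv_cancel₀ hN0, one_smul, hS2, hE]
      module
    have key : (C1 • (G2 - N • G1 + (N - 1) • G0)⁻¹ -
        C2 • (G2 + (((T : ℝ) - 1) * N) • G1 + (N - 1) • G0)⁻¹)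
        = N⁻¹ • (C1 • (S1 + N⁻¹ • E)⁻¹ - C2 • (S2 + N⁻¹ • E)⁻¹) := by
      rw [hA, hB, smul_matrix_inv N hN0, smul_matrix_inv N hN0, smul_sub,
        smul_comm C1 N⁻¹, smul_comm C2 N⁻¹, smul_sub]
    have hNinv0 : (N : ℝ)⁻¹ ≠ 0 := inv_ne_zero hN0
    rw [key, smul_matrix_inv N⁻¹ hNinv0, inv_inv]
    have : (((I : ℝ) * T) / N) • (D * (N • (C1 • (S1 + N⁻¹ • E)⁻¹ -
          C2 • (S2 + N⁻¹ • E)⁻¹)⁻¹) * D)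
        = ((I : ℝ) * T) • (D * (C1 • (S1 + N⁻¹ • E)⁻¹ - C2 • (S2 + N⁻¹ • E)⁻¹)⁻¹ * D) := by
      rw [Matrix.mul_smul, Matrix.smul_mul, smul_smul, div_mul_eq_mul_div,
        mul_div_assoc, div_self hN0, mul_one]
    rw [this]
  -- conclude
  have hfinal : Tendsto
      (fun N : ℝ =>
        ((((I : ℝ) * T) / N) •
          (D * (C1 • (G2 - N • G1 + (N - 1) • G0)⁻¹ -
              C2 • (G2 + (((T : ℝ) - 1) * N) • G1 + (N - 1) • G0)⁻¹)⁻¹ * D)) l l')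
      atTop (nhds (g 0 l l')) := htend.congr' heq
  have hg0' : g 0 l l'
      = ((((I : ℝ) * T) • (D * (C1 • S1⁻¹ - C2 • S2⁻¹)⁻¹ * D)) l l') := by rw [hg0]
  rw [hg0'] at hfinal
  exact hfinal
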